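/- Let G be a finite group, H ≤ G with left coset representatives g₁ = 1, g₂, …, g_k, and ρ : G → GL(V) a representation over a field. In the polynomial ring with one variable Y_s for each element s of the partition S = {HgH ∪ Hg⁻¹H}, the matrix π^sym_H(M(ρ)) = ∑_{g∈G} ρ(g)·Y_{σ(g)} factors as (∑_{i=1}^k ρ(g_i)·Y_{σ(g_i)}) · (∑_{h∈H} ρ(h)), and the first factor becomes the identity matrix under the specialization Y_H = 1, Y_s = 0 for s ≠ H; hence rank(π^sym_H(M(ρ))) = rank(∑_{h∈H} ρ(h)) after any generic specialization (in particular, over the fraction field, rank π^sym_H(M(ρ)) = rank ∑_{h∈H} ρ(h)). -/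

import Mathlib

open MvPolynomial
open scoped Pointwise

theorem matrix_rank_map_field {F K : Type*} [Field F] [Field K] (f : F →+* K)
    {m n : ℕ} (M : Matrix (Fin m) (Fin n) F) :
    (M.map f).rank = M.rank := by
  classical
  set L := M.mulVecLin with hL
  set W := LinearMap.range L with hW
  have hrW : Module.finrank F W = M.rank := rfl
  let b : Module.Basis (Fin M.rank) F W := Module.finBasisOfFinrankEq F W hrW
  let e : W ≃ₗ[F] (Fin M.rank → F) := b.equivFun
  let Bl : (Fin M.rank → F) →ₗ[F] (Fin m → F) := W.subtype ∘ₗ (e.symm : (Fin M.rank → F) →ₗ[F] W)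
  let Cl : (Fin n → F) →ₗ[F] (Fin M.rank → F) := (e : W →ₗ[F] (Fin M.rank → F)) ∘ₗ L.rangeRestrict
  have hBC : Bl ∘ₗ Cl = L := by
    ext x
    simp [Bl, Cl]
  have hBinj : LinearMap.ker Bl = ⊥ := by
    rw [LinearMap.ker_eq_bot]
    exact W.injective_subtype.comp e.symm.injective
  have hCsurj : LinearMap.range Cl = ⊤ := by
    rw [LinearMap.range_eq_top]
    exact e.surjective.comp L.surjective_rangeRestrict
  obtain ⟨Pl, hP⟩ := Bl.exists_leftInverse_of_injective hBinj
  obtain ⟨Ql, hQ⟩ := Cl.exists_rightInverse_of_surjective hCsurj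
  have hM : M = LinearMap.toMatrix' Bl * LinearMap.toMatrix' Cl := by
    rw [← LinearMap.toMatrix'_comp, hBC, hL, ← Matrix.toLin'_apply', LinearMap.toMatrix'_toLin']
  have hPB : LinearMap.toMatrix' Pl * LinearMap.toMatrix' Bl = 1 := by
    rw [← LinearMap.toMatrix'_comp, hP, LinearMap.toMatrix'_id]
  have hCQ : LinearMap.toMatrix' Cl * LinearMap.toMatrix' Ql = 1 := by
    rw [← LinearMap.toMatrix'_comp, hQ, LinearMap.toMatrix'_id]
  apply le_antisymm
  · calc (M.map f).rank
        = ((LinearMap.toMatrix' Bl).map f * (LinearMap.toMatrix' Cl).map f).rank := by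
          rw [← Matrix.map_mul, ← hM]
      _ ≤ ((LinearMap.toMatrix' Cl).map f).rank := Matrix.rank_mul_le_right _ _
      _ ≤ M.rank := by simpa using Matrix.rank_le_card_height ((LinearMap.toMatrix' Cl).map f)
  · have h1 : (LinearMap.toMatrix' Pl).map f * M.map f * (LinearMap.toMatrix' Ql).map f = 1 := by
      rw [← Matrix.map_mul, ← Matrix.map_mul]
      have h2 : LinearMap.toMatrix' Pl * M * LinearMap.toMatrix' Ql
          = LinearMap.toMatrix' Pl * (LinearMap.toMatrix' Bl * LinearMap.toMatrix' Cl)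
            * LinearMap.toMatrix' Ql :=
        congrArg (fun X => LinearMap.toMatrix' Pl * X * LinearMap.toMatrix' Ql) hM
      have : LinearMap.toMatrix' Pl * M * LinearMap.toMatrix' Ql = 1 := by
        rw [h2, ← Matrix.mul_assoc, hPB, Matrix.one_mul, hCQ]
      rw [this, Matrix.map_one f f.map_zero f.map_one]
    calc M.rank = (1 : Matrix (Fin M.rank) (Fin M.rank) K).rank := by simp [Matrix.rank_one]
      _ ≤ ((LinearMap.toMatrix' Pl).map f * M.map f).rank := by
          rw [← h1]; exact Matrix.rank_mul_le_left _ _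
      _ ≤ (M.map f).rank := Matrix.rank_mul_le_right _ _


/-- Let `g₁ = 1, …, g_k` be left coset representatives of `H ≤ G` and `ρ` a
matrix representation of `G` over a field.  With one variable `Y_s` per part
`s = HgH ∪ Hg⁻¹H` of the partition `S`, the matrix
`π^sym_H(M(ρ)) = ∑_{g∈G} Y_{σ(g)} • ρ(g)` factors as
`(∑ᵢ Y_{σ(gᵢ)} • ρ(gᵢ)) · (∑_{h∈H} ρ(h))`; the first factor specializes to the identity
under `Y_H = 1, Y_s = 0 (s ≠ H)`; and over the fraction field
`rank π^sym_H(M(ρ)) = rank ∑_{h∈H} ρ(h)`. -/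
theorem stmt16 (F : Type*) [Field F] (G : Type*) [Group G] [Fintype G]
    [DecidableEq (Set G)] (H : Subgroup G) [Fintype H]
    (k : ℕ) (hk : 0 < k) (gr : Fin k → G) (hg1 : gr ⟨0, hk⟩ = 1)
    (hreps : ∀ x : G, ∃! i : Fin k, (gr i)⁻¹ * x ∈ H)
    (σg : G → Set G)
    (hσ : ∀ x : G, σg x = (H : Set G) * ({x} : Set G) * (H : Set G) ∪
        (H : Set G) * ({x⁻¹} : Set G) * (H : Set G))
    (n : ℕ) (ρ : G →* Matrix (Fin n) (Fin n) F) :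
    (∑ g : G, (X (σg g) : MvPolynomial (Set G) F) • (ρ g).map (C : F → MvPolynomial (Set G) F))
        = (∑ i : Fin k,
            (X (σg (gr i)) : MvPolynomial (Set G) F) • (ρ (gr i)).map (C : F → MvPolynomial (Set G) F))
          * (∑ h : H, (ρ (h : G)).map (C : F → MvPolynomial (Set G) F)) ∧
    (∑ i : Fin k,
        (X (σg (gr i)) : MvPolynomial (Set G) F) • (ρ (gr i)).map (C : F → MvPolynomial (Set G) F)).map
        (aeval fun s : Set G => if s = (H : Set G) then (1 : F) else 0) = 1 ∧
    ((∑ g : G, (X (σg g) : MvPolynomial (Set G) F) • (ρ g).map (C : F → MvPolynomial (Set G) F)).map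
        (algebraMap (MvPolynomial (Set G) F) (FractionRing (MvPolynomial (Set G) F)))).rank
      = (∑ h : H, ρ (h : G)).rank := by
  classical
  -- σ is right-H-invariant
  have hσH : ∀ (g h : G), h ∈ H → σg (g * h) = σg g := by
    intro g h hh
    rw [hσ, hσ]
    congr 1
    · have : ({g * h} : Set G) = {g} * {h} := by
        rw [Set.singleton_mul_singleton]
      rw [this, ← mul_assoc, mul_assoc ((H : Set G) * {g}),
        Subgroup.singleton_mul_subgroup hh]
    · have : ({(g * h)⁻¹} : Set G) = {h⁻¹} * {g⁻¹} := by
        rw [Set.singleton_mul_singleton, mul_inv_rev]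
      rw [this, ← mul_assoc, Subgroup.subgroup_mul_singleton (H.inv_mem hh)]
  -- σ g = H iff g ∈ H
  have hσ_mem : ∀ g : G, σg g = (H : Set G) ↔ g ∈ H := by
    intro g
    constructor
    · intro hs
      have hmem : (1 : G) * g * 1 ∈ (H : Set G) * {g} * (H : Set G) :=
        Set.mul_mem_mul (Set.mul_mem_mul H.one_mem (Set.mem_singleton g)) H.one_mem
      have : g ∈ σg g := by
        rw [hσ]
        exact Set.mem_union_left _ (by simpa using hmem)
      rw [hs] at this
      exact this
    · intro hg
      rw [hσ, Subgroup.subgroup_mul_singleton hg,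
        Subgroup.subgroup_mul_singleton (H.inv_mem hg)]
      have hHH : (H : Set G) * (H : Set G) = (H : Set G) :=
        Submonoid.coe_mul_self_eq H.toSubmonoid
      rw [hHH, Set.union_self]
  -- the bijection (i, h) ↦ gr i * h
  have hbij : Function.Bijective (fun p : Fin k × H => gr p.1 * (p.2 : G)) := by
    constructor
    · rintro ⟨i, h⟩ ⟨j, h'⟩ heq
      simp only at heq
      obtain ⟨w, hw, huniq⟩ := hreps (gr i * h)
      have hi : (gr i)⁻¹ * (gr i * (h : G)) ∈ H := by
        simpa [← mul_assoc] using h.2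
      have hj : (gr j)⁻¹ * (gr i * (h : G)) ∈ H := by
        rw [heq]
        simpa [← mul_assoc] using h'.2
      have hij : i = j := (huniq i hi).trans (huniq j hj).symm
      subst hij
      have : (h : G) = (h' : G) := mul_left_cancel heq
      exact Prod.ext rfl (Subtype.ext this)
    · intro x
      obtain ⟨i, hi, -⟩ := hreps x
      refine ⟨⟨i, ⟨(gr i)⁻¹ * x, hi⟩⟩, ?_⟩
      simp
  have hpart1 :
      (∑ g : G, (X (σg g) : MvPolynomial (Set G) F) • (ρ g).map (C : F → MvPolynomial (Set G) F))
        = (∑ i : Fin k,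
            (X (σg (gr i)) : MvPolynomial (Set G) F) • (ρ (gr i)).map (C : F → MvPolynomial (Set G) F))
          * (∑ h : H, (ρ (h : G)).map (C : F → MvPolynomial (Set G) F)) := by
    rw [Finset.sum_mul_sum]
    rw [← Fintype.sum_bijective _ hbij _
      (fun g => (X (σg g) : MvPolynomial (Set G) F) • (ρ g).map (C : F → MvPolynomial (Set G) F))
      (fun p => rfl)]
    rw [Fintype.sum_prod_type]
    refine Finset.sum_congr rfl fun i _ => Finset.sum_congr rfl fun h _ => ?_
    simp only [hσH (gr i) h h.2, map_mul, Matrix.map_mul, smul_mul_assoc]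
  have hpart2 :
      (∑ i : Fin k,
        (X (σg (gr i)) : MvPolynomial (Set G) F) • (ρ (gr i)).map (C : F → MvPolynomial (Set G) F)).map
        (aeval fun s : Set G => if s = (H : Set G) then (1 : F) else 0) = 1 := by
    ext a b
    simp only [Matrix.map_apply, Matrix.sum_apply, Matrix.smul_apply, Matrix.map_apply,
      smul_eq_mul, map_sum, map_mul, aeval_X, aeval_C, Algebra.algebraMap_self, RingHom.id_apply]
    have key : ∀ i : Fin k, σg (gr i) = (H : Set G) ↔ i = ⟨0, hk⟩ := by
      intro i
      obtain ⟨w, hw, huniq⟩ := hreps 1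
      rw [hσ_mem]
      constructor
      · intro hi
        have h1 : (gr i)⁻¹ * 1 ∈ H := by simpa using H.inv_mem hi
        have h2 : (gr ⟨0, hk⟩)⁻¹ * 1 ∈ H := by simpa [hg1] using H.one_mem
        exact (huniq i h1).trans (huniq ⟨0, hk⟩ h2).symm
      · rintro rfl
        rw [hg1]
        exact H.one_mem
    have : ∀ i : Fin k,
        (if σg (gr i) = (H : Set G) then (1 : F) else 0) * (ρ (gr i)) a b
          = if i = ⟨0, hk⟩ then (ρ (gr i)) a b else 0 := by
      intro i
      by_cases hcase : i = ⟨0, hk⟩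
      · subst hcase; simp [(key _).2 rfl]
      · have hne : ¬ σg (gr i) = (H : Set G) := fun hcon => hcase ((key i).1 hcon)
        simp [hcase, hne]
    rw [Finset.sum_congr rfl fun i _ => this i]
    simp [hg1, Matrix.one_apply]
  refine ⟨hpart1, hpart2, ?_⟩
  -- Part 3: rank equality over the fraction field
  set R := MvPolynomial (Set G) F with hR
  set K := FractionRing (MvPolynomial (Set G) F) with hK
  set φK := algebraMap (MvPolynomial (Set G) F) (FractionRing (MvPolynomial (Set G) F)) with hφK
  set B1 := ∑ i : Fin k,
      (X (σg (gr i)) : MvPolynomial (Set G) F) • (ρ (gr i)).map (C : F → MvPolynomial (Set G) F)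
    with hB1
  set D := ∑ h : H, ρ (h : G) with hD
  have hC1 : (∑ h : H, (ρ (h : G)).map (C : F → MvPolynomial (Set G) F)) = D.map C := by
    refine Matrix.ext fun a b => ?_
    simp [hD, Matrix.sum_apply, Matrix.map_apply, map_sum]
  set ψ := (aeval fun s : Set G => if s = (H : Set G) then (1 : F) else 0 :
    MvPolynomial (Set G) F →ₐ[F] F) with hψ
  have hdet1 : ψ B1.det = 1 := by
    have h := RingHom.map_det (ψ : MvPolynomial (Set G) F →+* F) B1
    rw [RingHom.mapMatrix_apply] at h
    have h2 : B1.map ⇑(ψ : MvPolynomial (Set G) F →+* F) = 1 := hpart2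
    rw [h2, Matrix.det_one] at h
    exact h
  have hdet0 : B1.det ≠ 0 := by
    intro hzero
    rw [hzero, map_zero] at hdet1
    exact zero_ne_one hdet1
  have hinj : Function.Injective φK := IsFractionRing.injective (MvPolynomial (Set G) F) K
  have hunit : IsUnit ((B1.map ⇑φK).det) := by
    have hdm : (B1.map ⇑φK).det = φK B1.det := by
      rw [RingHom.map_det, RingHom.mapMatrix_apply]
    rw [hdm]
    refine isUnit_iff_ne_zero.mpr fun hc => hdet0 (hinj ?_)
    rw [hc, map_zero]
  calc ((∑ g : G, (X (σg g) : MvPolynomial (Set G) F) •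
          (ρ g).map (C : F → MvPolynomial (Set G) F)).map ⇑φK).rank
      = ((B1 * D.map C).map ⇑φK).rank := by rw [hpart1, hC1]
    _ = ((B1.map ⇑φK) * ((D.map C).map ⇑φK)).rank := by rw [Matrix.map_mul]
    _ = ((D.map C).map ⇑φK).rank := Matrix.rank_mul_eq_right_of_isUnit_det _ _ hunit
    _ = (D.map ⇑(φK.comp (C : F →+* MvPolynomial (Set G) F))).rank := by
        rw [Matrix.map_map, RingHom.coe_comp]
    _ = D.rank := matrix_rank_map_field _ _
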